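/- If for every index 0 ≤ i ≤ k−1 either S_a(i) = 0 or S_b(i) = 0, then H is an (α, β)-spanner of G(S_a, S_b); that is, d_H(u, v) ≤ α·d_G(u, v) + β for all vertices u, v. -/

import Mathlib

/-!
Statement 19: If for every index `i` either `S_a(i) = 0` or `S_b(i) = 0`,
then `H` is an `(α, β)`-spanner of `G(S_a, S_b)`; that is,
`d_H(u, v) ≤ α·d_G(u, v) + β` for all vertices `u, v`.
-/

/-- Generic graph built from "hub" vertices and "segments": each segment `s`
is a path with `len s` edges between the two hubs `ends s`, whose
`len s - 1` internal vertices are the pairs `⟨s, t⟩`.  A segment of length 1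
is just an edge between its two endpoints. -/
def segGraph {Hub Seg : Type} (ends : Seg → Hub × Hub) (len : Seg → ℕ) :
    SimpleGraph (Hub ⊕ (s : Seg) × Fin (len s - 1)) :=
  SimpleGraph.fromRel fun u v =>
    match u, v with
    | Sum.inl x, Sum.inl y => ∃ s, len s = 1 ∧ ends s = (x, y)
    | Sum.inl x, Sum.inr ⟨s, t⟩ =>
        ((ends s).1 = x ∧ (t : ℕ) = 0) ∨ ((ends s).2 = x ∧ (t : ℕ) + 2 = len s)
    | Sum.inr ⟨s, t⟩, Sum.inl x =>
        ((ends s).1 = x ∧ (t : ℕ) = 0) ∨ ((ends s).2 = x ∧ (t : ℕ) + 2 = len s)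
    | Sum.inr ⟨s, t⟩, Sum.inr ⟨s', t'⟩ =>
        s = s' ∧ ((t : ℕ) + 1 = (t' : ℕ) ∨ (t' : ℕ) + 1 = (t : ℕ))


section SegWalk

open SimpleGraph

variable {Hub Seg : Type} {ends : Seg → Hub × Hub} {len : Seg → ℕ}

lemma segGraph_adj_one {s : Seg} (h1 : len s = 1)
    (hne : (ends s).1 ≠ (ends s).2) :
    (segGraph ends len).Adj (Sum.inl (ends s).1) (Sum.inl (ends s).2) := by
  rw [segGraph, SimpleGraph.fromRel_adj]
  exact ⟨by simp [hne], Or.inl ⟨s, h1, rfl⟩⟩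

lemma segGraph_adj_start {s : Seg} (h0 : 0 < len s - 1) :
    (segGraph ends len).Adj (Sum.inl (ends s).1) (Sum.inr ⟨s, ⟨0, h0⟩⟩) := by
  rw [segGraph, SimpleGraph.fromRel_adj]
  exact ⟨by simp, Or.inl (Or.inl ⟨rfl, rfl⟩)⟩

lemma segGraph_adj_end {s : Seg} {t : ℕ} (ht : t + 2 = len s) :
    (segGraph ends len).Adj (Sum.inr ⟨s, ⟨t, by omega⟩⟩) (Sum.inl (ends s).2) := by
  rw [segGraph, SimpleGraph.fromRel_adj]
  exact ⟨by simp, Or.inl (Or.inr ⟨rfl, ht⟩)⟩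

lemma segGraph_adj_step {s : Seg} {t : ℕ} (h : t + 1 < len s - 1) :
    (segGraph ends len).Adj (Sum.inr ⟨s, ⟨t, by omega⟩⟩) (Sum.inr ⟨s, ⟨t + 1, h⟩⟩) := by
  rw [segGraph, SimpleGraph.fromRel_adj]
  refine ⟨?_, Or.inl ⟨rfl, Or.inl rfl⟩⟩
  simp [Fin.ext_iff]

lemma segGraph_exists_walk (s : Seg) (h1 : 1 ≤ len s)
    (hne : (ends s).1 ≠ (ends s).2) :
    ∃ z : (segGraph ends len).Walk (Sum.inl (ends s).1) (Sum.inl (ends s).2),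
      z.length = len s := by
  rcases eq_or_lt_of_le h1 with h | h2
  · exact ⟨Walk.cons (segGraph_adj_one h.symm hne) Walk.nil, by simp [← h]⟩
  · have aux : ∀ k : ℕ, ∀ t : ℕ, ∀ ht : t + 2 + k = len s,
        ∃ z : (segGraph ends len).Walk (Sum.inr ⟨s, ⟨t, by omega⟩⟩)
          (Sum.inl (ends s).2), z.length = k + 1 := by
      intro k
      induction k with
      | zero =>
        intro t ht
        exact ⟨Walk.cons (segGraph_adj_end (by omega)) Walk.nil, by simp⟩
      | succ k ih =>
        intro t ht
        obtain ⟨z, hz⟩ := ih (t + 1) (by omega)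
        exact ⟨Walk.cons (segGraph_adj_step (by omega)) z, by simp [hz]⟩
    obtain ⟨z, hz⟩ := aux (len s - 2) 0 (by omega)
    exact ⟨Walk.cons (segGraph_adj_start (by omega)) z, by simp [hz]; omega⟩

end SegWalk


namespace SpannerGadget

/-- Hub vertices of the spanner gadget `H`. -/
inductive Hub (m : ℕ) : Type
  | L : Fin (2 ^ m) → Hub m
  | R : Fin (2 ^ m) → Hub m
  | lk1 : Hub m
  | rk1 : Hub m
  | lk2 : Hub m
  | rk2 : Hub m
  | F : Fin m → Hub m
  | T : Fin m → Hub m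
  | F' : Fin m → Hub m
  | T' : Fin m → Hub m

/-- Segments (paths between hubs) of the spanner gadget `H`,
with `P = α + β`. -/
inductive Seg (m : ℕ) : Type
  | Lbit : Fin (2 ^ m) → Fin m → Seg m   -- ℓ_i – (f_j or t_j), length P/2
  | Rbit : Fin (2 ^ m) → Fin m → Seg m   -- r_i – (f'_j or t'_j), length P/2
  | FT' : Fin m → Seg m                  -- edge f_j – t'_j
  | TF' : Fin m → Seg m                  -- edge t_j – f'_j
  | Llk1 : Fin (2 ^ m) → Seg m           -- ℓ_i – ℓ_{k+1}, length P
  | Rrk1 : Fin (2 ^ m) → Seg m           -- r_i – r_{k+1}, length P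
  | Llk2 : Fin (2 ^ m) → Seg m           -- ℓ_i – ℓ_{k+2}, length P/2
  | Rrk2 : Fin (2 ^ m) → Seg m           -- r_i – r_{k+2}, length P/2
  | lk1rk1 : Seg m                       -- edge ℓ_{k+1} – r_{k+1}

open Hub Seg

/-- Endpoints of each segment. -/
def ends (m : ℕ) : Seg m → Hub m × Hub m
  | Lbit i j => (L i, if Nat.testBit i.val j.val then T j else F j)
  | Rbit i j => (R i, if Nat.testBit i.val j.val then T' j else F' j)
  | FT' j => (F j, T' j)
  | TF' j => (T j, F' j)
  | Llk1 i => (L i, lk1)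
  | Rrk1 i => (R i, rk1)
  | Llk2 i => (L i, lk2)
  | Rrk2 i => (R i, rk2)
  | lk1rk1 => (lk1, rk1)

/-- Length of each segment, where `α` and `β` are the spanner parameters and
`P = α + β`. -/
def len (m α β : ℕ) : Seg m → ℕ
  | FT' _ => 1
  | TF' _ => 1
  | lk1rk1 => 1
  | Llk1 _ => α + β
  | Rrk1 _ => α + β
  | _ => (α + β) / 2

/-- Vertices of the spanner gadget `H` (and of `G(S_a,S_b)`). -/
abbrev V (m α β : ℕ) : Type := Hub m ⊕ (s : Seg m) × Fin (len m α β s - 1)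

/-- The spanner gadget `H`. -/
def H (m α β : ℕ) : SimpleGraph (V m α β) := segGraph (ends m) (len m α β)

/-- Extra edges depending on the input strings: an edge `ℓ_i–ℓ_{k+1}` for each
`i` with `S_a(i) = 1` and an edge `r_i–r_{k+1}` for each `i` with `S_b(i) = 1`. -/
def extraRel (m α β : ℕ) (Sa Sb : Fin (2 ^ m) → Bool) : V m α β → V m α β → Prop
  | Sum.inl (L i), Sum.inl lk1 => Sa i = true
  | Sum.inl (R i), Sum.inl rk1 => Sb i = true
  | _, _ => False

/-- The graph `G(S_a, S_b)`: the gadget `H` together with the input edges. -/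
def G (m α β : ℕ) (Sa Sb : Fin (2 ^ m) → Bool) : SimpleGraph (V m α β) :=
  H m α β ⊔ SimpleGraph.fromRel (extraRel m α β Sa Sb)

open SimpleGraph Sum

deriving instance DecidableEq for Hub
deriving instance DecidableEq for Seg

variable {m α β : ℕ}

/-- Walk bound in `H`. -/
def WB (m α β : ℕ) (u v : V m α β) (n : ℕ) : Prop :=
  ∃ z : (H m α β).Walk u v, z.length ≤ n

lemma WB.trans {u v w : V m α β} {a b : ℕ} (h1 : WB m α β u v a)
    (h2 : WB m α β v w b) : WB m α β u w (a + b) := by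
  obtain ⟨z1, hz1⟩ := h1; obtain ⟨z2, hz2⟩ := h2
  exact ⟨z1.append z2, by rw [Walk.length_append]; omega⟩

lemma WB.symm {u v : V m α β} {a : ℕ} (h1 : WB m α β u v a) : WB m α β v u a := by
  obtain ⟨z1, hz1⟩ := h1
  exact ⟨z1.reverse, by rwa [Walk.length_reverse]⟩

lemma WB.mono {u v : V m α β} {a b : ℕ} (h1 : WB m α β u v a) (hab : a ≤ b) :
    WB m α β u v b := by
  obtain ⟨z1, hz1⟩ := h1; exact ⟨z1, le_trans hz1 hab⟩

lemma wb_of_adj {u v : V m α β} (h : (H m α β).Adj u v) : WB m α β u v 1 :=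
  ⟨Walk.cons h Walk.nil, le_refl 1⟩

lemma dist_le_of_wb {u v : V m α β} {n : ℕ} (h : WB m α β u v n) :
    (H m α β).dist u v ≤ n := by
  obtain ⟨z, hz⟩ := h
  exact le_trans (SimpleGraph.dist_le z) hz

lemma wb_seg (s : Seg m) (h1 : 1 ≤ len m α β s)
    (hne : (ends m s).1 ≠ (ends m s).2) :
    WB m α β (inl (ends m s).1) (inl (ends m s).2) (len m α β s) := by
  obtain ⟨z, hz⟩ := segGraph_exists_walk (ends := ends m) (len := len m α β) s h1 hne
  exact ⟨z, le_of_eq hz⟩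

section Specific

open Hub Seg

variable (heven : Even (α + β)) (hpos : 0 < α + β)
include heven hpos

lemma half_pos : 1 ≤ (α + β) / 2 := by
  obtain ⟨c, hc⟩ := heven; omega

lemma half_half : (α + β) / 2 + (α + β) / 2 = α + β := by
  obtain ⟨c, hc⟩ := heven; omega

lemma wbA (i : Fin (2 ^ m)) : WB m α β (inl (L i)) (inl lk1) (α + β) :=
  wb_seg (Llk1 i) (by exact hpos) (by simp [ends])

lemma wbA' (i : Fin (2 ^ m)) : WB m α β (inl (R i)) (inl rk1) (α + β) :=
  wb_seg (Rrk1 i) (by exact hpos) (by simp [ends])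

lemma wbL2 (i : Fin (2 ^ m)) : WB m α β (inl (L i)) (inl lk2) ((α + β) / 2) :=
  wb_seg (Llk2 i) (half_pos heven hpos) (by simp [ends])

lemma wbR2 (i : Fin (2 ^ m)) : WB m α β (inl (R i)) (inl rk2) ((α + β) / 2) :=
  wb_seg (Rrk2 i) (half_pos heven hpos) (by simp [ends])

lemma wbB (i i' : Fin (2 ^ m)) : WB m α β (inl (L i)) (inl (L i')) (α + β) :=
  ((wbL2 heven hpos i).trans (wbL2 heven hpos i').symm).mono
    (le_of_eq (half_half heven hpos))

lemma wbB' (i i' : Fin (2 ^ m)) : WB m α β (inl (R i)) (inl (R i')) (α + β) :=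
  ((wbR2 heven hpos i).trans (wbR2 heven hpos i').symm).mono
    (le_of_eq (half_half heven hpos))

lemma wbE : WB m α β (inl lk1) (inl rk1) 1 :=
  wb_of_adj (segGraph_adj_one (s := Seg.lk1rk1) rfl (by simp [ends]))

lemma wbLbitT (i : Fin (2 ^ m)) (j : Fin m) (hb : i.val.testBit j.val = true) :
    WB m α β (inl (L i)) (inl (T j)) ((α + β) / 2) := by
  have h := wb_seg (m := m) (α := α) (β := β) (Lbit i j)
    (half_pos heven hpos) (by simp [ends]; split <;> simp)
  simpa [ends, hb, len] using h

lemma wbLbitF (i : Fin (2 ^ m)) (j : Fin m) (hb : i.val.testBit j.val = false) :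
    WB m α β (inl (L i)) (inl (F j)) ((α + β) / 2) := by
  have h := wb_seg (m := m) (α := α) (β := β) (Lbit i j)
    (half_pos heven hpos) (by simp [ends]; split <;> simp)
  simpa [ends, hb, len] using h

lemma wbRbitT (i : Fin (2 ^ m)) (j : Fin m) (hb : i.val.testBit j.val = true) :
    WB m α β (inl (R i)) (inl (T' j)) ((α + β) / 2) := by
  have h := wb_seg (m := m) (α := α) (β := β) (Rbit i j)
    (half_pos heven hpos) (by simp [ends]; split <;> simp)
  simpa [ends, hb, len] using h

lemma wbRbitF (i : Fin (2 ^ m)) (j : Fin m) (hb : i.val.testBit j.val = false) :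
    WB m α β (inl (R i)) (inl (F' j)) ((α + β) / 2) := by
  have h := wb_seg (m := m) (α := α) (β := β) (Rbit i j)
    (half_pos heven hpos) (by simp [ends]; split <;> simp)
  simpa [ends, hb, len] using h

lemma wbC {i j : Fin (2 ^ m)} (hij : i ≠ j) :
    WB m α β (inl (L i)) (inl (R j)) (α + β + 1) := by
  have hv : i.val ≠ j.val := fun hv => hij (Fin.ext hv)
  obtain ⟨b, hb⟩ := Nat.exists_testBit_ne_of_ne hv
  have hbm : b < m := by
    by_contra h'
    push_neg at h'
    have h2 : (2 : ℕ) ^ m ≤ 2 ^ b := Nat.pow_le_pow_right (by norm_num) h'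
    rw [Nat.testBit_lt_two_pow (lt_of_lt_of_le i.isLt h2),
      Nat.testBit_lt_two_pow (lt_of_lt_of_le j.isLt h2)] at hb
    exact hb rfl
  set bf : Fin m := ⟨b, hbm⟩ with hbf
  have hhalf := half_half heven hpos
  cases hbi : i.val.testBit b with
  | true =>
    have hbj : j.val.testBit b = false := by
      cases hbj : j.val.testBit b
      · rfl
      · rw [hbi, hbj] at hb; exact absurd rfl hb
    have w1 := wbLbitT heven hpos i bf hbi
    have w2 : WB m α β (inl (T bf)) (inl (F' bf)) 1 :=
      wb_of_adj (segGraph_adj_one (s := Seg.TF' bf) rfl (by simp [ends]))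
    have w3 := (wbRbitF heven hpos j bf hbj).symm
    exact ((w1.trans w2).trans w3).mono (by omega)
  | false =>
    have hbj : j.val.testBit b = true := by
      cases hbj : j.val.testBit b
      · rw [hbi, hbj] at hb; exact absurd rfl hb
      · rfl
    have w1 := wbLbitF heven hpos i bf hbi
    have w2 : WB m α β (inl (F bf)) (inl (T' bf)) 1 :=
      wb_of_adj (segGraph_adj_one (s := Seg.FT' bf) rfl (by simp [ends]))
    have w3 := (wbRbitT heven hpos j bf hbj).symm
    exact ((w1.trans w2).trans w3).mono (by omega)

end Specific

section Struct

open Hub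

variable {Sa Sb : Fin (2 ^ m) → Bool}

lemma extraRel_cases {x y : V m α β} (hxy : extraRel m α β Sa Sb x y) :
    (∃ i, Sa i = true ∧ x = inl (L i) ∧ y = inl lk1) ∨
    (∃ i, Sb i = true ∧ x = inl (R i) ∧ y = inl rk1) := by
  cases x with
  | inr a => exact False.elim hxy
  | inl hx =>
    cases y with
    | inr a => cases hx <;> exact False.elim hxy
    | inl hy =>
      cases hx <;> cases hy <;>
        first
          | exact Or.inl ⟨_, hxy, rfl, rfl⟩
          | exact Or.inr ⟨_, hxy, rfl, rfl⟩
          | exact False.elim hxy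

lemma G_adj_cases {x y : V m α β} (hxy : (G m α β Sa Sb).Adj x y) :
    (H m α β).Adj x y ∨
    (∃ i, Sa i = true ∧ ((x = inl (L i) ∧ y = inl lk1) ∨ (y = inl (L i) ∧ x = inl lk1))) ∨
    (∃ i, Sb i = true ∧ ((x = inl (R i) ∧ y = inl rk1) ∨ (y = inl (R i) ∧ x = inl rk1))) := by
  rw [G, SimpleGraph.sup_adj] at hxy
  rcases hxy with hxy | hxy
  · exact Or.inl hxy
  · rw [SimpleGraph.fromRel_adj] at hxy
    rcases hxy with ⟨-, hxy | hxy⟩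
    · rcases extraRel_cases hxy with ⟨i, hi, h1, h2⟩ | ⟨i, hi, h1, h2⟩
      · exact Or.inr (Or.inl ⟨i, hi, Or.inl ⟨h1, h2⟩⟩)
      · exact Or.inr (Or.inr ⟨i, hi, Or.inl ⟨h1, h2⟩⟩)
    · rcases extraRel_cases hxy with ⟨i, hi, h1, h2⟩ | ⟨i, hi, h1, h2⟩
      · exact Or.inr (Or.inl ⟨i, hi, Or.inr ⟨h1, h2⟩⟩)
      · exact Or.inr (Or.inr ⟨i, hi, Or.inr ⟨h1, h2⟩⟩)

lemma transferH {x y : V m α β} (w : (G m α β Sa Sb).Walk x y)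
    (hL : (inl lk1 : V m α β) ∉ w.support) (hR : (inl rk1 : V m α β) ∉ w.support) :
    ∃ z : (H m α β).Walk x y, z.length = w.length := by
  induction w with
  | nil => exact ⟨SimpleGraph.Walk.nil, rfl⟩
  | @cons a b cc h p ih =>
    rw [SimpleGraph.Walk.support_cons, List.mem_cons] at hL hR
    push_neg at hL hR
    have hbp : b ∈ p.support := p.start_mem_support
    have hH : (H m α β).Adj a b := by
      rcases G_adj_cases h with hh | ⟨i, -, ⟨-, h2⟩ | ⟨-, h2⟩⟩ | ⟨i, -, ⟨-, h2⟩ | ⟨-, h2⟩⟩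
      · exact hh
      · exact absurd h2.symm (fun he => hL.2 (he ▸ hbp))
      · exact absurd h2.symm hL.1
      · exact absurd h2.symm (fun he => hR.2 (he ▸ hbp))
      · exact absurd h2.symm hR.1
    obtain ⟨z, hz⟩ := ih hL.2 hR.2
    exact ⟨SimpleGraph.Walk.cons hH z, by simp [hz]⟩

lemma lemCL' {x e : V m α β} (w : (G m α β Sa Sb).Walk x e) :
    ∀ (he : e = inl lk1), (inl rk1 : V m α β) ∉ w.support →
    w.support.Nodup →
    (∃ z : (H m α β).Walk x (inl lk1), z.length = w.length) ∨
    (∃ i, Sa i = true ∧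
      ∃ z : (H m α β).Walk x (inl (L i)), z.length + 1 = w.length) := by
  induction w with
  | nil =>
    rintro rfl - -
    exact Or.inl ⟨SimpleGraph.Walk.nil, rfl⟩
  | @cons a b cc h p ih =>
    rintro rfl hR hnd
    have ihe := fun hh hc => ih rfl hh hc
    clear ih
    rw [SimpleGraph.Walk.support_cons, List.nodup_cons] at hnd
    have hmem : (inl lk1 : V m α β) ∈ p.support := p.end_mem_support
    have ha : a ≠ (inl lk1 : V m α β) := fun he => hnd.1 (he ▸ hmem)
    rw [SimpleGraph.Walk.support_cons, List.mem_cons] at hR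
    push_neg at hR
    by_cases hb : b = (inl lk1 : V m α β)
    · subst hb
      by_cases hnil : p.Nil
      · have hlen0 : p.length = 0 := SimpleGraph.Walk.nil_iff_length_eq.mp hnil
        rcases G_adj_cases h with hh | ⟨i, hi, ⟨h1, -⟩ | ⟨h1, -⟩⟩ | ⟨i, -, ⟨-, h2⟩ | ⟨-, h2⟩⟩
        · exact Or.inl ⟨SimpleGraph.Walk.cons hh SimpleGraph.Walk.nil, by simp [hlen0]⟩
        · subst h1
          exact Or.inr ⟨i, hi, SimpleGraph.Walk.nil, by simp [hlen0]⟩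
        · simp at h1
        · simp at h2
        · exact absurd h2.symm hR.1
      · exfalso
        obtain ⟨u', h', q, rfl⟩ := SimpleGraph.Walk.not_nil_iff.mp hnil
        rw [SimpleGraph.Walk.support_cons, List.nodup_cons] at hnd
        exact hnd.2.1 q.end_mem_support
    · have hbp : b ∈ p.support := p.start_mem_support
      have hH : (H m α β).Adj a b := by
        rcases G_adj_cases h with hh | ⟨i, -, ⟨-, h2⟩ | ⟨-, h2⟩⟩ | ⟨i, -, ⟨-, h2⟩ | ⟨-, h2⟩⟩
        · exact hh
        · exact absurd h2 hb
        · exact absurd h2 ha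
        · exact absurd h2.symm (fun he => hR.2 (he ▸ hbp))
        · exact absurd h2.symm hR.1
      rcases ihe hR.2 hnd.2 with ⟨z, hz⟩ | ⟨i, hi, z, hz⟩
      · exact Or.inl ⟨SimpleGraph.Walk.cons hH z, by simp [hz]⟩
      · exact Or.inr ⟨i, hi, SimpleGraph.Walk.cons hH z, by simp; omega⟩

lemma lemCL {x : V m α β} (w : (G m α β Sa Sb).Walk x (inl lk1))
    (hR : (inl rk1 : V m α β) ∉ w.support)
    (hnd : w.support.Nodup) :
    (∃ z : (H m α β).Walk x (inl lk1), z.length = w.length) ∨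
    (∃ i, Sa i = true ∧
      ∃ z : (H m α β).Walk x (inl (L i)), z.length + 1 = w.length) :=
  lemCL' w rfl hR hnd

lemma lemCR' {x e : V m α β} (w : (G m α β Sa Sb).Walk x e) :
    ∀ (he : e = inl rk1), (inl lk1 : V m α β) ∉ w.support →
    w.support.Nodup →
    (∃ z : (H m α β).Walk x (inl rk1), z.length = w.length) ∨
    (∃ i, Sb i = true ∧
      ∃ z : (H m α β).Walk x (inl (R i)), z.length + 1 = w.length) := by
  induction w with
  | nil =>
    rintro rfl - -
    exact Or.inl ⟨SimpleGraph.Walk.nil, rfl⟩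
  | @cons a b cc h p ih =>
    rintro rfl hL hnd
    have ihe := fun hh hc => ih rfl hh hc
    clear ih
    rw [SimpleGraph.Walk.support_cons, List.nodup_cons] at hnd
    have hmem : (inl rk1 : V m α β) ∈ p.support := p.end_mem_support
    have ha : a ≠ (inl rk1 : V m α β) := fun he => hnd.1 (he ▸ hmem)
    rw [SimpleGraph.Walk.support_cons, List.mem_cons] at hL
    push_neg at hL
    by_cases hb : b = (inl rk1 : V m α β)
    · subst hb
      by_cases hnil : p.Nil
      · have hlen0 : p.length = 0 := SimpleGraph.Walk.nil_iff_length_eq.mp hnil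
        rcases G_adj_cases h with hh | ⟨i, -, ⟨-, h2⟩ | ⟨-, h2⟩⟩ | ⟨i, hi, ⟨h1, -⟩ | ⟨h1, -⟩⟩
        · exact Or.inl ⟨SimpleGraph.Walk.cons hh SimpleGraph.Walk.nil, by simp [hlen0]⟩
        · simp at h2
        · exact absurd h2.symm hL.1
        · subst h1
          exact Or.inr ⟨i, hi, SimpleGraph.Walk.nil, by simp [hlen0]⟩
        · simp at h1
      · exfalso
        obtain ⟨u', h', q, rfl⟩ := SimpleGraph.Walk.not_nil_iff.mp hnil
        rw [SimpleGraph.Walk.support_cons, List.nodup_cons] at hnd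
        exact hnd.2.1 q.end_mem_support
    · have hbp : b ∈ p.support := p.start_mem_support
      have hH : (H m α β).Adj a b := by
        rcases G_adj_cases h with hh | ⟨i, -, ⟨-, h2⟩ | ⟨-, h2⟩⟩ | ⟨i, -, ⟨-, h2⟩ | ⟨-, h2⟩⟩
        · exact hh
        · exact absurd h2.symm (fun he => hL.2 (he ▸ hbp))
        · exact absurd h2.symm hL.1
        · exact absurd h2 hb
        · exact absurd h2 ha
      rcases ihe hL.2 hnd.2 with ⟨z, hz⟩ | ⟨i, hi, z, hz⟩
      · exact Or.inl ⟨SimpleGraph.Walk.cons hH z, by simp [hz]⟩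
      · exact Or.inr ⟨i, hi, SimpleGraph.Walk.cons hH z, by simp; omega⟩

lemma lemCR {x : V m α β} (w : (G m α β Sa Sb).Walk x (inl rk1))
    (hL : (inl lk1 : V m α β) ∉ w.support)
    (hnd : w.support.Nodup) :
    (∃ z : (H m α β).Walk x (inl rk1), z.length = w.length) ∨
    (∃ i, Sb i = true ∧
      ∃ z : (H m α β).Walk x (inl (R i)), z.length + 1 = w.length) :=
  lemCR' w rfl hL hnd

end Struct

open SimpleGraph Sum Hub in
theorem statement19 (m α β : ℕ) (hm : 1 ≤ m) (hα : 1 ≤ α)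
    (heven : Even (α + β)) (hpos : 0 < α + β)
    (Sa Sb : Fin (2 ^ m) → Bool)
    (h : ∀ i : Fin (2 ^ m), Sa i = false ∨ Sb i = false) :
    ∀ u v : V m α β,
      (H m α β).dist u v ≤ α * (G m α β Sa Sb).dist u v + β := by
  intro u v
  classical
  rcases Classical.em ((G m α β Sa Sb).Reachable u v) with hreach | hreach
  · obtain ⟨w0, hw0⟩ := hreach.exists_walk_length_eq_dist
    set n := (G m α β Sa Sb).dist u v with hn
    set p := w0.bypass with hpdef
    have hpath : p.IsPath := w0.bypass_isPath
    have hplen : p.length = n :=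
      le_antisymm (hw0 ▸ w0.length_bypass_le) (hn ▸ SimpleGraph.dist_le p)
    have hnd : p.support.Nodup := hpath.support_nodup
    have hle : n ≤ α * n := Nat.le_mul_of_pos_left n hα
    have hkey : ∀ nn : ℕ, 1 ≤ nn → nn + α ≤ α * nn + 1 := by
      intro nn hnn
      have h1 : 1 * nn ≤ α * nn := Nat.mul_le_mul_right nn hα
      have h2 : α - 1 ≤ (α - 1) * nn := Nat.le_mul_of_pos_right (α - 1) hnn
      have h3 : (α - 1) * nn = α * nn - 1 * nn := Nat.sub_mul α 1 nn
      omega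
    have hkn : 1 ≤ n → n + α ≤ α * n + 1 := hkey n
    have hlkrk : (inl lk1 : V m α β) ≠ inl rk1 := by simp
    rcases Classical.em ((inl lk1 : V m α β) ∈ p.support) with hL | hL
    · set w1 := p.takeUntil (inl lk1) hL with hw1def
      set w2 := p.dropUntil (inl lk1) hL with hw2def
      have hspec : w1.append w2 = p := p.take_spec hL
      have hlen12 : w1.length + w2.length = n := by
        rw [← hplen, ← hspec, Walk.length_append]
      have hsup : p.support = w1.support ++ w2.support.tail := by
        rw [← hspec, Walk.support_append]
      have hndw : (w1.support ++ w2.support.tail).Nodup := hsup ▸ hnd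
      have hnd1 : w1.support.Nodup := (hpath.takeUntil hL).support_nodup
      have hnd2 : w2.support.Nodup := (hpath.dropUntil hL).support_nodup
      have hdisj : ∀ x, x ∈ w1.support → x ∈ w2.support.tail → False :=
        fun x hx1 hx2 => List.disjoint_of_nodup_append hndw hx1 hx2
      have hlk1w1 : (inl lk1 : V m α β) ∈ w1.support := w1.end_mem_support
      have hw2cons : w2.support = (inl lk1 : V m α β) :: w2.support.tail :=
        w2.support_eq_cons
      rcases Classical.em ((inl rk1 : V m α β) ∈ p.support) with hR | hR
      · -- both hubs on the path
        have hGadj : (G m α β Sa Sb).Adj (inl lk1) (inl rk1) := by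
          have hHadj : (H m α β).Adj (inl lk1) (inl rk1) :=
            segGraph_adj_one (s := Seg.lk1rk1) rfl (by simp [ends])
          rw [G, SimpleGraph.sup_adj]
          exact Or.inl hHadj
        rw [hsup, List.mem_append] at hR
        rcases hR with hRw1 | hRw2t
        · -- rk1 comes before lk1
          set w1a := w1.takeUntil (inl rk1) hRw1 with hw1adef
          set w1b := w1.dropUntil (inl rk1) hRw1 with hw1bdef
          have hspec1 : w1a.append w1b = w1 := w1.take_spec hRw1
          have hlen1ab : w1a.length + w1b.length = w1.length := by
            rw [← hspec1, Walk.length_append]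
          have hsup1 : w1.support = w1a.support ++ w1b.support.tail := by
            rw [← hspec1, Walk.support_append]
          have hndw1 : (w1a.support ++ w1b.support.tail).Nodup := hsup1 ▸ hnd1
          have hdisj1 : ∀ x, x ∈ w1a.support → x ∈ w1b.support.tail → False :=
            fun x hx1 hx2 => List.disjoint_of_nodup_append hndw1 hx1 hx2
          have hlk1b : (inl lk1 : V m α β) ∈ w1b.support.tail :=
            Walk.end_mem_tail_support_of_ne hlkrk.symm w1b
          have hlk1a : (inl lk1 : V m α β) ∉ w1a.support :=
            fun hc => hdisj1 _ hc hlk1b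
          -- middle piece w1b has length 1
          have hmidlen : w1b.length = 1 := by
            have hne0 : w1b.length ≠ 0 := fun h0 =>
              hlkrk.symm (Walk.eq_of_length_eq_zero h0)
            have hbig : n ≤ w1a.length + (1 + w2.length) := by
              have := SimpleGraph.dist_le
                (w1a.append ((Walk.cons hGadj.symm Walk.nil).append w2))
              rw [Walk.length_append, Walk.length_append] at this
              simpa using this
            omega
          -- rk1 not in w2
          have hrk1w2 : (inl rk1 : V m α β) ∉ w2.support := by
            intro hc
            rw [hw2cons, List.mem_cons] at hc
            rcases hc with hc | hc
            · exact hlkrk hc.symm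
            · exact hdisj _ (Walk.support_takeUntil_subset w1 hRw1
                w1a.end_mem_support) hc
          -- apply lemCR to w1a, lemCL to w2.reverse
          have hlkw2r : (inl lk1 : V m α β) ∈ w2.support := w2.start_mem_support
          have hres1 := lemCR w1a hlk1a (hpath.takeUntil hL |>.takeUntil hRw1).support_nodup
          have hres2 := lemCL w2.reverse
            (by rw [Walk.support_reverse]; simpa using hrk1w2)
            (by rw [Walk.support_reverse]; exact List.nodup_reverse.mpr hnd2)
          have hwbE' : WB m α β (inl rk1) (inl lk1) 1 := (wbE heven hpos).symm
          rcases hres1 with ⟨z1, hz1⟩ | ⟨j, hj, z1, hz1⟩ <;>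
            rcases hres2 with ⟨z3, hz3⟩ | ⟨i, hi, z3, hz3⟩
          · -- allH / allH
            have hwb : WB m α β u v (w1a.length + (1 + w2.length)) :=
              WB.trans (⟨z1, le_of_eq hz1⟩ : WB m α β u (inl rk1) w1a.length)
                (hwbE'.trans ⟨z3.reverse, by simp only [Walk.length_reverse] at hz3 ⊢; omega⟩)
            try simp only [Walk.length_reverse] at hz3
            have := dist_le_of_wb hwb
            omega
          · -- allH / extra i at lk1
            try simp only [Walk.length_reverse] at hz3
            have hn1 : 1 ≤ n := by omega
            have hwb : WB m α β u v
                (w1a.length + (1 + ((α + β) + (w2.length - 1)))) :=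
              WB.trans (⟨z1, le_of_eq hz1⟩ : WB m α β u (inl rk1) w1a.length)
                (hwbE'.trans (((wbA heven hpos i).symm).trans
                  ⟨z3.reverse, by simp only [Walk.length_reverse] at hz3 ⊢; omega⟩))
            try simp only [Walk.length_reverse] at hz3
            have := dist_le_of_wb hwb
            have := hkn hn1
            omega
          · -- extra j at rk1 / allH
            try simp only [Walk.length_reverse] at hz3
            have hn1 : 1 ≤ n := by omega
            have hwb : WB m α β u v
                ((w1a.length - 1) + ((α + β) + (1 + w2.length))) :=
              WB.trans (⟨z1, by omega⟩ : WB m α β u (inl (R j)) (w1a.length - 1))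
                ((wbA' heven hpos j).trans (hwbE'.trans
                  ⟨z3.reverse, by simp only [Walk.length_reverse] at hz3 ⊢; omega⟩))
            try simp only [Walk.length_reverse] at hz3
            have := dist_le_of_wb hwb
            have := hkn hn1
            omega
          · -- extra j at rk1 / extra i at lk1
            have hij : i ≠ j := by
              rcases h i with hfa | hfb
              · rw [hi] at hfa; exact absurd hfa (by simp)
              · intro he; rw [he, hj] at hfb; exact absurd hfb (by simp)
            try simp only [Walk.length_reverse] at hz3
            have hn1 : 1 ≤ n := by omega
            have hwb : WB m α β u v
                ((w1a.length - 1) + ((α + β + 1) + (w2.length - 1))) :=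
              WB.trans (⟨z1, by omega⟩ : WB m α β u (inl (R j)) (w1a.length - 1))
                (((wbC heven hpos hij).symm).trans
                  ⟨z3.reverse, by simp only [Walk.length_reverse] at hz3 ⊢; omega⟩)
            try simp only [Walk.length_reverse] at hz3
            have := dist_le_of_wb hwb
            have := hkn hn1
            omega
        · -- lk1 comes before rk1 : rk1 ∈ w2.support.tail
          have hRw2 : (inl rk1 : V m α β) ∈ w2.support := by
            rw [hw2cons]; exact List.mem_cons_of_mem _ hRw2t
          set w2a := w2.takeUntil (inl rk1) hRw2 with hw2adef
          set w2b := w2.dropUntil (inl rk1) hRw2 with hw2bdef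
          have hspec2 : w2a.append w2b = w2 := w2.take_spec hRw2
          have hlen2ab : w2a.length + w2b.length = w2.length := by
            rw [← hspec2, Walk.length_append]
          have hsup2 : w2.support = w2a.support ++ w2b.support.tail := by
            rw [← hspec2, Walk.support_append]
          have hndw2 : (w2a.support ++ w2b.support.tail).Nodup := hsup2 ▸ hnd2
          have hdisj2 : ∀ x, x ∈ w2a.support → x ∈ w2b.support.tail → False :=
            fun x hx1 hx2 => List.disjoint_of_nodup_append hndw2 hx1 hx2
          -- middle piece w2a has length 1
          have hmidlen : w2a.length = 1 := by
            have hne0 : w2a.length ≠ 0 := fun h0 =>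
              hlkrk (Walk.eq_of_length_eq_zero h0)
            have hbig : n ≤ w1.length + (1 + w2b.length) := by
              have := SimpleGraph.dist_le
                (w1.append ((Walk.cons hGadj Walk.nil).append w2b))
              rw [Walk.length_append, Walk.length_append] at this
              simpa using this
            omega
          -- rk1 not in w1
          have hrk1w1 : (inl rk1 : V m α β) ∉ w1.support :=
            fun hc => hdisj _ hc hRw2t
          -- lk1 not in w2b
          have hndc : (inl lk1 : V m α β) ∉ w2.support.tail :=
            (List.nodup_cons.mp (hw2cons ▸ hnd2)).1
          have htl2 : w2.support.tail = w2a.support.tail ++ w2b.support.tail := by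
            rw [← hspec2, Walk.tail_support_append]
          have hlk1w2b : (inl lk1 : V m α β) ∉ w2b.support := by
            intro hc
            rw [w2b.support_eq_cons, List.mem_cons] at hc
            rcases hc with hc | hc
            · exact hlkrk hc
            · exact hndc (htl2 ▸ List.mem_append.mpr (Or.inr hc))
          have hres1 := lemCL w1 hrk1w1 hnd1
          have hres2 := lemCR w2b.reverse
            (by rw [Walk.support_reverse]; simpa using hlk1w2b)
            (by rw [Walk.support_reverse]
                exact ((hpath.dropUntil hL).dropUntil hRw2).support_nodup |> List.nodup_reverse.mpr)
          rcases hres1 with ⟨z1, hz1⟩ | ⟨i, hi, z1, hz1⟩ <;>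
            rcases hres2 with ⟨z3, hz3⟩ | ⟨j, hj, z3, hz3⟩
          · have hwb : WB m α β u v (w1.length + (1 + w2b.length)) :=
              WB.trans (⟨z1, le_of_eq hz1⟩ : WB m α β u (inl lk1) w1.length)
                ((wbE heven hpos).trans
                  ⟨z3.reverse, by simp only [Walk.length_reverse] at hz3 ⊢; omega⟩)
            try simp only [Walk.length_reverse] at hz3
            have := dist_le_of_wb hwb
            omega
          · try simp only [Walk.length_reverse] at hz3
            have hn1 : 1 ≤ n := by omega
            have hwb : WB m α β u v
                (w1.length + (1 + ((α + β) + (w2b.length - 1)))) :=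
              WB.trans (⟨z1, le_of_eq hz1⟩ : WB m α β u (inl lk1) w1.length)
                ((wbE heven hpos).trans (((wbA' heven hpos j).symm).trans
                  ⟨z3.reverse, by simp only [Walk.length_reverse] at hz3 ⊢; omega⟩))
            try simp only [Walk.length_reverse] at hz3
            have := dist_le_of_wb hwb
            have := hkn hn1
            omega
          · try simp only [Walk.length_reverse] at hz3
            have hn1 : 1 ≤ n := by omega
            have hwb : WB m α β u v
                ((w1.length - 1) + ((α + β) + (1 + w2b.length))) :=
              WB.trans (⟨z1, by omega⟩ : WB m α β u (inl (L i)) (w1.length - 1))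
                ((wbA heven hpos i).trans ((wbE heven hpos).trans
                  ⟨z3.reverse, by simp only [Walk.length_reverse] at hz3 ⊢; omega⟩))
            try simp only [Walk.length_reverse] at hz3
            have := dist_le_of_wb hwb
            have := hkn hn1
            omega
          · have hij : i ≠ j := by
              rcases h i with hfa | hfb
              · rw [hi] at hfa; exact absurd hfa (by simp)
              · intro he; rw [he, hj] at hfb; exact absurd hfb (by simp)
            try simp only [Walk.length_reverse] at hz3
            have hn1 : 1 ≤ n := by omega
            have hwb : WB m α β u v
                ((w1.length - 1) + ((α + β + 1) + (w2b.length - 1))) :=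
              WB.trans (⟨z1, by omega⟩ : WB m α β u (inl (L i)) (w1.length - 1))
                ((wbC heven hpos hij).trans
                  ⟨z3.reverse, by simp only [Walk.length_reverse] at hz3 ⊢; omega⟩)
            try simp only [Walk.length_reverse] at hz3
            have := dist_le_of_wb hwb
            have := hkn hn1
            omega
      · -- only lk1 on the path
        have hrk1w1 : (inl rk1 : V m α β) ∉ w1.support :=
          fun hc => hR (Walk.support_takeUntil_subset p hL hc)
        have hrk1w2 : (inl rk1 : V m α β) ∉ w2.support :=
          fun hc => hR (Walk.support_dropUntil_subset p hL hc)
        have hres1 := lemCL w1 hrk1w1 hnd1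
        have hres2 := lemCL w2.reverse
          (by rw [Walk.support_reverse]; simpa using hrk1w2)
          (by rw [Walk.support_reverse]; exact List.nodup_reverse.mpr hnd2)
        rcases hres1 with ⟨z1, hz1⟩ | ⟨i, hi, z1, hz1⟩ <;>
          rcases hres2 with ⟨z3, hz3⟩ | ⟨i', hi', z3, hz3⟩
        · have hwb : WB m α β u v (w1.length + w2.length) :=
            WB.trans (⟨z1, le_of_eq hz1⟩ : WB m α β u (inl lk1) w1.length)
              ⟨z3.reverse, by simp only [Walk.length_reverse] at hz3 ⊢; omega⟩
          try simp only [Walk.length_reverse] at hz3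
          have := dist_le_of_wb hwb
          omega
        · try simp only [Walk.length_reverse] at hz3
          have hn1 : 1 ≤ n := by omega
          have hwb : WB m α β u v (w1.length + ((α + β) + (w2.length - 1))) :=
            WB.trans (⟨z1, le_of_eq hz1⟩ : WB m α β u (inl lk1) w1.length)
              (((wbA heven hpos i').symm).trans
                ⟨z3.reverse, by simp only [Walk.length_reverse] at hz3 ⊢; omega⟩)
          try simp only [Walk.length_reverse] at hz3
          have := dist_le_of_wb hwb
          have := hkn hn1
          omega
        · try simp only [Walk.length_reverse] at hz3
          have hn1 : 1 ≤ n := by omega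
          have hwb : WB m α β u v ((w1.length - 1) + ((α + β) + w2.length)) :=
            WB.trans (⟨z1, by omega⟩ : WB m α β u (inl (L i)) (w1.length - 1))
              ((wbA heven hpos i).trans
                ⟨z3.reverse, by simp only [Walk.length_reverse] at hz3 ⊢; omega⟩)
          try simp only [Walk.length_reverse] at hz3
          have := dist_le_of_wb hwb
          have := hkn hn1
          omega
        · try simp only [Walk.length_reverse] at hz3
          have hn1 : 1 ≤ n := by omega
          have hwb : WB m α β u v
              ((w1.length - 1) + ((α + β) + (w2.length - 1))) :=
            WB.trans (⟨z1, by omega⟩ : WB m α β u (inl (L i)) (w1.length - 1))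
              ((wbB heven hpos i i').trans
                ⟨z3.reverse, by simp only [Walk.length_reverse] at hz3 ⊢; omega⟩)
          try simp only [Walk.length_reverse] at hz3
          have := dist_le_of_wb hwb
          have := hkn hn1
          omega
    · rcases Classical.em ((inl rk1 : V m α β) ∈ p.support) with hR | hR
      · -- only rk1 on the path
        set w1 := p.takeUntil (inl rk1) hR with hw1def
        set w2 := p.dropUntil (inl rk1) hR with hw2def
        have hspec : w1.append w2 = p := p.take_spec hR
        have hlen12 : w1.length + w2.length = n := by
          rw [← hplen, ← hspec, Walk.length_append]
        have hnd1 : w1.support.Nodup := (hpath.takeUntil hR).support_nodup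
        have hnd2 : w2.support.Nodup := (hpath.dropUntil hR).support_nodup
        have hlk1w1 : (inl lk1 : V m α β) ∉ w1.support :=
          fun hc => hL (Walk.support_takeUntil_subset p hR hc)
        have hlk1w2 : (inl lk1 : V m α β) ∉ w2.support :=
          fun hc => hL (Walk.support_dropUntil_subset p hR hc)
        have hres1 := lemCR w1 hlk1w1 hnd1
        have hres2 := lemCR w2.reverse
          (by rw [Walk.support_reverse]; simpa using hlk1w2)
          (by rw [Walk.support_reverse]; exact List.nodup_reverse.mpr hnd2)
        rcases hres1 with ⟨z1, hz1⟩ | ⟨j, hj, z1, hz1⟩ <;>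
          rcases hres2 with ⟨z3, hz3⟩ | ⟨j', hj', z3, hz3⟩
        · have hwb : WB m α β u v (w1.length + w2.length) :=
            WB.trans (⟨z1, le_of_eq hz1⟩ : WB m α β u (inl rk1) w1.length)
              ⟨z3.reverse, by simp only [Walk.length_reverse] at hz3 ⊢; omega⟩
          try simp only [Walk.length_reverse] at hz3
          have := dist_le_of_wb hwb
          omega
        · try simp only [Walk.length_reverse] at hz3
          have hn1 : 1 ≤ n := by omega
          have hwb : WB m α β u v (w1.length + ((α + β) + (w2.length - 1))) :=
            WB.trans (⟨z1, le_of_eq hz1⟩ : WB m α β u (inl rk1) w1.length)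
              (((wbA' heven hpos j').symm).trans
                ⟨z3.reverse, by simp only [Walk.length_reverse] at hz3 ⊢; omega⟩)
          try simp only [Walk.length_reverse] at hz3
          have := dist_le_of_wb hwb
          have := hkn hn1
          omega
        · try simp only [Walk.length_reverse] at hz3
          have hn1 : 1 ≤ n := by omega
          have hwb : WB m α β u v ((w1.length - 1) + ((α + β) + w2.length)) :=
            WB.trans (⟨z1, by omega⟩ : WB m α β u (inl (R j)) (w1.length - 1))
              ((wbA' heven hpos j).trans
                ⟨z3.reverse, by simp only [Walk.length_reverse] at hz3 ⊢; omega⟩)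
          try simp only [Walk.length_reverse] at hz3
          have := dist_le_of_wb hwb
          have := hkn hn1
          omega
        · try simp only [Walk.length_reverse] at hz3
          have hn1 : 1 ≤ n := by omega
          have hwb : WB m α β u v
              ((w1.length - 1) + ((α + β) + (w2.length - 1))) :=
            WB.trans (⟨z1, by omega⟩ : WB m α β u (inl (R j)) (w1.length - 1))
              ((wbB' heven hpos j j').trans
                ⟨z3.reverse, by simp only [Walk.length_reverse] at hz3 ⊢; omega⟩)
          try simp only [Walk.length_reverse] at hz3
          have := dist_le_of_wb hwb
          have := hkn hn1
          omega
      · -- neither hub: all edges are H-edges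
        obtain ⟨z, hz⟩ := transferH p hL hR
        have := dist_le_of_wb (⟨z, le_of_eq hz⟩ : WB m α β u v p.length)
        omega
  · have hHreach : ¬ (H m α β).Reachable u v := fun hh =>
      hreach (hh.mono le_sup_left)
    rw [SimpleGraph.dist_eq_zero_of_not_reachable hHreach]
    exact Nat.zero_le _
end SpannerGadget
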